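/- arXiv:2011.09734 — 2 statements merged into one kernel-verified Lean document; each statement's English description precedes it below -/
import Mathlib

section
/- Let p ≥ 1, let h ∈ ℝ^p, let S ⊆ {1,…,p} with s = |S|, let λ > 0 and c_min > 0, and let q be a real number with q ≥ 0 (playing the role of the quadratic form hᵀ S_{X̃X̃} h ≥ 0). If 2q + λ‖h_{S^c}‖₁ ≤ 3λ‖h_S‖₁ and q ≥ c_min ‖h_S‖₂², then ‖h‖₁ ≤ (6/c_min)·s·λ. (This is the deterministic core of the proof of Theorem 2: combining the Lasso basic inequality on the event that the empirical cross term is small with the restricted eigenvalue condition yields the ℓ₁ error bound ‖β̂_lasso − β_proj‖₁ ≤ (6/c_min) s λ.) -/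
/-- the deterministic core of the Lasso ℓ₁-error bound (Theorem 2):
if `2q + λ‖h_{Sᶜ}‖₁ ≤ 3λ‖h_S‖₁` and `q ≥ c_min ‖h_S‖₂²` with `q ≥ 0`, then
`‖h‖₁ ≤ (6/c_min)·s·λ` where `s = |S|`. -/
theorem stmt_6 (p : ℕ) (hp : 1 ≤ p) (h : Fin p → ℝ) (S : Finset (Fin p))
    (lam cmin q : ℝ) (hlam : 0 < lam) (hcmin : 0 < cmin) (hq : 0 ≤ q)
    (h1 : 2 * q + lam * ∑ j ∈ Sᶜ, |h j| ≤ 3 * lam * ∑ j ∈ S, |h j|)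
    (h2 : cmin * ∑ j ∈ S, (h j) ^ 2 ≤ q) :
    ∑ j, |h j| ≤ (6 / cmin) * S.card * lam := by
  set A := ∑ j ∈ S, |h j| with hA
  set B := ∑ j ∈ Sᶜ, |h j| with hB
  set Q := ∑ j ∈ S, (h j) ^ 2 with hQ
  have hAnn : 0 ≤ A := Finset.sum_nonneg fun j _ => abs_nonneg _
  have hBnn : 0 ≤ B := Finset.sum_nonneg fun j _ => abs_nonneg _
  -- Cauchy–Schwarz: A^2 ≤ s * Q
  have hCS : A ^ 2 ≤ S.card * Q := by
    have := sq_sum_le_card_mul_sum_sq (s := S) (f := fun j => |h j|)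
    simpa [hA, hQ, sq_abs] using this
  -- total sum = A + B
  have hsplit : ∑ j, |h j| = A + B := by
    rw [hA, hB, ← Finset.sum_add_sum_compl S]
  -- B ≤ 3A
  have hB3 : B ≤ 3 * A := by nlinarith [h1, hq, hlam]
  -- 2 c_min Q ≤ 3 λ A
  have hkey : 2 * cmin * Q ≤ 3 * lam * A := by nlinarith [hBnn]
  -- A ≤ 3 s λ / (2 c_min)
  have hAb : 2 * cmin * A ≤ 3 * (S.card : ℝ) * lam := by
    rcases eq_or_lt_of_le hAnn with h0 | h0
    · nlinarith [(Nat.cast_nonneg S.card : (0:ℝ) ≤ S.card)]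
    · have : 2 * cmin * A ^ 2 ≤ 3 * lam * A * S.card := by
        nlinarith [mul_le_mul_of_nonneg_left hCS (le_of_lt (by linarith : (0:ℝ) < 2 * cmin)),
          mul_le_mul_of_nonneg_left hkey ((Nat.cast_nonneg S.card : (0:ℝ) ≤ S.card))]
      nlinarith
  rw [hsplit]
  have : A + B ≤ 4 * A := by linarith
  have h4 : 4 * A ≤ 6 / cmin * S.card * lam := by
    rw [div_mul_eq_mul_div, div_mul_eq_mul_div, le_div_iff₀ hcmin]
    nlinarith
  linarith
end

section
/- Let (Ω, F, P) be a probability space, K ≥ 1, B : Ω → {1,…,K} measurable with p_k := P(B = k) > 0 for all k, and π ∈ (0,1). Let Y(1), Y(0) : Ω → ℝ be square-integrable and let X : Ω → ℝ^p have square-integrable coordinates. For each k let P_k = P(·|{B=k}), Σ_k the conditional covariance matrix of X under P_k, and c_k(a) the vector of conditional covariances Cov_{P_k}(X_i, Y(a)). Set Σ̃ = Σ_{k=1}^K p_k Σ_k and c̃(a) = Σ_{k=1}^K p_k c_k(a), assume Σ̃ is positive definite, define the projection coefficients β(a) = Σ̃⁻¹ c̃(a) and β* = (1−π)β(1) + πβ(0),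 and define the transformed outcomes r(a) = Y(a) − ⟨X, β*⟩. With ς²_V(π) = (1/π) Σ_k p_k Var_{P_k}(V(1)) + (1/(1−π)) Σ_k p_k Var_{P_k}(V(0)) and ς²_{HV} = Σ_k p_k ([E_{P_k} V(1) − E_P V(1)] − [E_{P_k} V(0) − E_P V(0)])², one has (ς²_r(π) + ς²_{Hr}) − (ς²_Y(π) + ς²_{HY}) = −(1/(π(1−π))) (β*)ᵀ Σ̃ β*, and this quantity is ≤ 0. (This is the variance-difference conclusion of Theorem 3: the stratum-common Lasso-adjusted estimator τ̂_lasso, whose asymptotic variance is ς²_r(π) + ς²_{Hr}, is asymptotically at least as efficient as the stratified difference-in-means estimator τ̂, whose asymptotic variance is ς²_Y(π) + ς²_{HY}.) -/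
open Matrix MeasureTheory ProbabilityTheory

/-- Variance of a real random variable under a measure `Q`:
`Var_Q(V) = E_Q[(V − E_Q V)²]`. -/
noncomputable def evar {Ω : Type*} [MeasurableSpace Ω] (Q : Measure Ω) (V : Ω → ℝ) : ℝ :=
  ∫ ω, (V ω - ∫ x, V x ∂Q) ^ 2 ∂Q

/-- Covariance of two real random variables under a measure `Q`:
`Cov_Q(V, W) = E_Q[(V − E_Q V)(W − E_Q W)]`. -/
noncomputable def ecov {Ω : Type*} [MeasurableSpace Ω] (Q : Measure Ω) (V W : Ω → ℝ) : ℝ :=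
  ∫ ω, (V ω - ∫ x, V x ∂Q) * (W ω - ∫ x, W x ∂Q) ∂Q

section Aux

variable {α : Type*} [MeasurableSpace α] {μ : Measure α}

/-- Product of two `L²` real functions is integrable. -/
lemma memL2_integrable_mul {f g : α → ℝ} (hf : MemLp f 2 μ) (hg : MemLp g 2 μ) :
    Integrable (fun x => f x * g x) μ := by
  have h := (hf.integrable_sq.add hg.integrable_sq).const_mul (1/2 : ℝ)
  refine h.mono' (hf.aestronglyMeasurable.mul hg.aestronglyMeasurable) ?_
  filter_upwards with x
  simp only [Pi.add_apply]
  rw [Real.norm_eq_abs, abs_mul]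
  nlinarith [sq_nonneg (|f x| - |g x|), sq_abs (f x), sq_abs (g x)]

lemma memL2_dot {p : ℕ} {X : α → Fin p → ℝ} (hX : ∀ i, MemLp (fun ω => X ω i) 2 μ)
    (b : Fin p → ℝ) : MemLp (fun ω => X ω ⬝ᵥ b) 2 μ := by
  have h := memLp_finset_sum (μ := μ) (p := 2) Finset.univ
    (f := fun i ω => b i * X ω i) (fun i _ => (hX i).const_mul (b i))
  have he : (fun a => ∑ i, b i * X a i) = fun ω => X ω ⬝ᵥ b := by
    funext a
    simp [dotProduct, mul_comm]
  rwa [he] at h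

lemma sq_sub_sum {p : ℕ} (W : ℝ) (U b : Fin p → ℝ) :
    (W - ∑ i, U i * b i) ^ 2 =
      W ^ 2 - ∑ i, b i * (2 * (U i * W)) + ∑ i, ∑ j, b i * b j * (U i * U j) := by
  have h1 : (2:ℝ) * ((∑ i, U i * b i) * W) = ∑ i, b i * (2 * (U i * W)) := by
    rw [Finset.sum_mul, Finset.mul_sum]
    exact Finset.sum_congr rfl fun i _ => by ring
  have h2 : (∑ i, U i * b i) * (∑ j, U j * b j) = ∑ i, ∑ j, b i * b j * (U i * U j) := by
    rw [Finset.sum_mul_sum]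
    exact Finset.sum_congr rfl fun i _ => Finset.sum_congr rfl fun j _ => by ring
  calc (W - ∑ i, U i * b i) ^ 2
      = W ^ 2 - 2 * ((∑ i, U i * b i) * W) + (∑ i, U i * b i) * (∑ j, U j * b j) := by ring
    _ = _ := by rw [h1, h2]

/-- Expansion of the variance of `V − ⟨X, b⟩`. -/
lemma evar_sub_dot {p : ℕ} (μ : Measure α) [IsFiniteMeasure μ] {V : α → ℝ} (hV : MemLp V 2 μ)
    {X : α → Fin p → ℝ} (hX : ∀ i, MemLp (fun ω => X ω i) 2 μ) (b : Fin p → ℝ) :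
    evar μ (fun ω => V ω - X ω ⬝ᵥ b) =
      evar μ V - 2 * ∑ i, b i * ecov μ (fun ω => X ω i) V
        + ∑ i, ∑ j, b i * b j * ecov μ (fun ω => X ω i) (fun ω => X ω j) := by
  have hVi : Integrable V μ := hV.integrable one_le_two
  have hXi : ∀ i, Integrable (fun x => X x i) μ := fun i => (hX i).integrable one_le_two
  have hZ : MemLp (fun ω => X ω ⬝ᵥ b) 2 μ := memL2_dot hX b
  set mV := ∫ x, V x ∂μ with hmV
  set mX : Fin p → ℝ := fun i => ∫ x, X x i ∂μ with hmX
  have hmZ : ∫ x, X x ⬝ᵥ b ∂μ = ∑ i, mX i * b i := by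
    rw [show (fun x => X x ⬝ᵥ b) = fun x => ∑ i, X x i * b i from rfl]
    rw [integral_finset_sum _ (fun i _ => (hXi i).mul_const (b i))]
    simp [hmX, integral_mul_const]
  have hmean : ∫ x, (V x - X x ⬝ᵥ b) ∂μ = mV - ∑ i, mX i * b i := by
    rw [integral_sub hVi (hZ.integrable one_le_two), hmZ]
  -- centered functions
  have hVc : MemLp (fun x => V x - mV) 2 μ := hV.sub (memLp_const mV)
  have hXc : ∀ i, MemLp (fun x => X x i - mX i) 2 μ :=
    fun i => (hX i).sub (memLp_const (mX i))
  have hIW2 : Integrable (fun x => (V x - mV) ^ 2) μ := hVc.integrable_sq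
  have hIUW : ∀ i, Integrable (fun x => (X x i - mX i) * (V x - mV)) μ :=
    fun i => memL2_integrable_mul (hXc i) hVc
  have hIUU : ∀ i j, Integrable (fun x => (X x i - mX i) * (X x j - mX j)) μ :=
    fun i j => memL2_integrable_mul (hXc i) (hXc j)
  have hI2 : Integrable (fun x => ∑ i, b i * (2 * ((X x i - mX i) * (V x - mV)))) μ :=
    integrable_finset_sum _ fun i _ => ((hIUW i).const_mul 2).const_mul (b i)
  have hI3 : Integrable
      (fun x => ∑ i, ∑ j, b i * b j * ((X x i - mX i) * (X x j - mX j))) μ :=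
    integrable_finset_sum _ fun i _ =>
      integrable_finset_sum _ fun j _ => (hIUU i j).const_mul (b i * b j)
  have hptw : ∀ x, (V x - X x ⬝ᵥ b - ∫ y, (V y - X y ⬝ᵥ b) ∂μ) ^ 2
      = (V x - mV) ^ 2 - ∑ i, b i * (2 * ((X x i - mX i) * (V x - mV)))
        + ∑ i, ∑ j, b i * b j * ((X x i - mX i) * (X x j - mX j)) := by
    intro x
    rw [hmean]
    have h0 : V x - X x ⬝ᵥ b - (mV - ∑ i, mX i * b i)
        = (V x - mV) - ∑ i, (X x i - mX i) * b i := by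
      have : X x ⬝ᵥ b - ∑ i, mX i * b i = ∑ i, (X x i - mX i) * b i := by
        rw [show X x ⬝ᵥ b = ∑ i, X x i * b i from rfl, ← Finset.sum_sub_distrib]
        exact Finset.sum_congr rfl fun i _ => by ring
      linarith [this]
    rw [h0, sq_sub_sum]
  calc evar μ (fun ω => V ω - X ω ⬝ᵥ b)
      = ∫ x, ((V x - mV) ^ 2 - ∑ i, b i * (2 * ((X x i - mX i) * (V x - mV)))
          + ∑ i, ∑ j, b i * b j * ((X x i - mX i) * (X x j - mX j))) ∂μ := by
        unfold evar
        exact integral_congr_ae (Filter.Eventually.of_forall hptw)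
    _ = evar μ V - 2 * ∑ i, b i * ecov μ (fun ω => X ω i) V
          + ∑ i, ∑ j, b i * b j * ecov μ (fun ω => X ω i) (fun ω => X ω j) := by
        have hI12 : Integrable (fun x => (V x - mV) ^ 2
            - ∑ i, b i * (2 * ((X x i - mX i) * (V x - mV)))) μ := hIW2.sub hI2
        rw [integral_add hI12 hI3, integral_sub hIW2 hI2,
          integral_finset_sum _ (fun i _ => ((hIUW i).const_mul 2).const_mul (b i)),
          integral_finset_sum _ (fun i _ =>
            integrable_finset_sum _ fun j _ => (hIUU i j).const_mul (b i * b j))]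
        have e2 : ∀ i ∈ Finset.univ,
            ∫ x, b i * (2 * ((X x i - mX i) * (V x - mV))) ∂μ
              = b i * (2 * ecov μ (fun ω => X ω i) V) := fun i _ => by
          rw [integral_const_mul, integral_const_mul]; rfl
        have e3 : ∀ i ∈ (Finset.univ : Finset (Fin p)),
            ∫ x, ∑ j, b i * b j * ((X x i - mX i) * (X x j - mX j)) ∂μ
              = ∑ j, b i * b j * ecov μ (fun ω => X ω i) (fun ω => X ω j) := fun i _ => by
          rw [integral_finset_sum _ (fun j _ => (hIUU i j).const_mul (b i * b j))]
          exact Finset.sum_congr rfl fun j _ => by rw [integral_const_mul]; rfl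
        rw [Finset.sum_congr rfl e2, Finset.sum_congr rfl e3]
        have : evar μ V = ∫ x, (V x - mV) ^ 2 ∂μ := rfl
        rw [this, Finset.mul_sum]
        congr 1
        congr 1
        exact Finset.sum_congr rfl fun i _ => by ring

lemma dot_sum_smul {p K : ℕ} (b : Fin p → ℝ) (w : Fin K → ℝ) (c : Fin K → Fin p → ℝ) :
    ∑ k, w k * (∑ i, b i * c k i) = b ⬝ᵥ (∑ k, w k • c k) := by
  simp only [dotProduct, Finset.sum_apply, Pi.smul_apply, smul_eq_mul,
    Finset.mul_sum]
  rw [Finset.sum_comm]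
  exact Finset.sum_congr rfl fun i _ => Finset.sum_congr rfl fun k _ => by ring

lemma dot_sum_smul_mat {p K : ℕ} (b : Fin p → ℝ) (w : Fin K → ℝ)
    (M : Fin K → Matrix (Fin p) (Fin p) ℝ) :
    ∑ k, w k * (∑ i, ∑ j, b i * b j * M k i j) = b ⬝ᵥ ((∑ k, w k • M k) *ᵥ b) := by
  simp only [dotProduct, Matrix.mulVec, Matrix.sum_apply, Matrix.smul_apply,
    smul_eq_mul, Finset.mul_sum, Finset.sum_mul]
  rw [Finset.sum_comm]
  refine Finset.sum_congr rfl fun i _ => ?_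
  rw [Finset.sum_comm]
  exact Finset.sum_congr rfl fun j _ => Finset.sum_congr rfl fun k _ => by ring

end Aux

/-- the variance-difference conclusion of Theorem 3: adjusting by the
mixture `β* = (1−π)β(1) + πβ(0)` of the projection coefficients gives
`(ς²_r(π) + ς²_{Hr}) − (ς²_Y(π) + ς²_{HY}) = −(1/(π(1−π)))(β*)ᵀΣ̃β* ≤ 0`. -/
theorem stmt_17 {Ω : Type*} [MeasurableSpace Ω] (P : Measure Ω) [IsProbabilityMeasure P]
    (K p : ℕ) (hK : 1 ≤ K) (hp : 1 ≤ p)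
    (B : Ω → Fin K) (hB : Measurable B)
    (hpk : ∀ k, 0 < (P {ω | B ω = k}).toReal)
    (π : ℝ) (hπ0 : 0 < π) (hπ1 : π < 1)
    (Y1 Y0 : Ω → ℝ) (hY1 : MemLp Y1 2 P) (hY0 : MemLp Y0 2 P)
    (X : Ω → Fin p → ℝ) (hX : ∀ i, MemLp (fun ω => X ω i) 2 P)
    (hpos : (∑ k, (P {ω | B ω = k}).toReal •
      (Matrix.of fun i j => ecov (P[|{ω | B ω = k}]) (fun ω => X ω i) (fun ω => X ω j)) :
        Matrix (Fin p) (Fin p) ℝ).PosDef) :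
    let pk : Fin K → ℝ := fun k => (P {ω | B ω = k}).toReal
    let Pc : Fin K → Measure Ω := fun k => P[|{ω | B ω = k}]
    let Sig : Fin K → Matrix (Fin p) (Fin p) ℝ :=
      fun k => Matrix.of fun i j => ecov (Pc k) (fun ω => X ω i) (fun ω => X ω j)
    let c1 : Fin K → Fin p → ℝ := fun k i => ecov (Pc k) (fun ω => X ω i) Y1
    let c0 : Fin K → Fin p → ℝ := fun k i => ecov (Pc k) (fun ω => X ω i) Y0
    let Sigt : Matrix (Fin p) (Fin p) ℝ := ∑ k, pk k • Sig k
    let ct1 : Fin p → ℝ := ∑ k, pk k • c1 k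
    let ct0 : Fin p → ℝ := ∑ k, pk k • c0 k
    let β1 : Fin p → ℝ := Sigt⁻¹ *ᵥ ct1
    let β0 : Fin p → ℝ := Sigt⁻¹ *ᵥ ct0
    let βstar : Fin p → ℝ := (1 - π) • β1 + π • β0
    let r1 : Ω → ℝ := fun ω => Y1 ω - X ω ⬝ᵥ βstar
    let r0 : Ω → ℝ := fun ω => Y0 ω - X ω ⬝ᵥ βstar
    let sig2 : (Ω → ℝ) → (Ω → ℝ) → ℝ := fun V1 V0 =>
      (1 / π) * ∑ k, pk k * evar (Pc k) V1 +
        (1 / (1 - π)) * ∑ k, pk k * evar (Pc k) V0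
    let sigH : (Ω → ℝ) → (Ω → ℝ) → ℝ := fun V1 V0 =>
      ∑ k, pk k * (((∫ x, V1 x ∂(Pc k)) - ∫ x, V1 x ∂P) -
        ((∫ x, V0 x ∂(Pc k)) - ∫ x, V0 x ∂P)) ^ 2
    (sig2 r1 r0 + sigH r1 r0) - (sig2 Y1 Y0 + sigH Y1 Y0) =
        -(1 / (π * (1 - π))) * (βstar ⬝ᵥ (Sigt *ᵥ βstar)) ∧
      -(1 / (π * (1 - π))) * (βstar ⬝ᵥ (Sigt *ᵥ βstar)) ≤ 0 := by
  intro pk Pc Sig c1 c0 Sigt ct1 ct0 β1 β0 βstar r1 r0 sig2 sigH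
  have hπ : π ≠ 0 := hπ0.ne'
  have h1π0 : (0:ℝ) < 1 - π := by linarith
  have h1π : (1:ℝ) - π ≠ 0 := h1π0.ne'
  have hne : ∀ k, P {ω | B ω = k} ≠ 0 := by
    intro k h
    simpa [h] using hpk k
  have hprob : ∀ k, IsProbabilityMeasure (Pc k) :=
    fun k => cond_isProbabilityMeasure (hne k)
  -- membership in L² transfers to conditional measures
  have hL2c : ∀ (k : Fin K) (f : Ω → ℝ), MemLp f 2 P → MemLp f 2 (Pc k) := by
    intro k f hf
    have : Pc k = (P {ω | B ω = k})⁻¹ • P.restrict {ω | B ω = k} := rfl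
    rw [this]
    exact (hf.restrict _).smul_measure (ENNReal.inv_ne_top.2 (hne k))
  have hY1c : ∀ k, MemLp Y1 2 (Pc k) := fun k => hL2c k _ hY1
  have hY0c : ∀ k, MemLp Y0 2 (Pc k) := fun k => hL2c k _ hY0
  have hXc : ∀ k i, MemLp (fun ω => X ω i) 2 (Pc k) := fun k i => hL2c k _ (hX i)
  -- variance expansions
  have hev1 : ∀ k, evar (Pc k) r1 =
      evar (Pc k) Y1 - 2 * ∑ i, βstar i * c1 k i
        + ∑ i, ∑ j, βstar i * βstar j * Sig k i j :=
    fun k => haveI := hprob k; evar_sub_dot (Pc k) (hY1c k) (hXc k) βstar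
  have hev0 : ∀ k, evar (Pc k) r0 =
      evar (Pc k) Y0 - 2 * ∑ i, βstar i * c0 k i
        + ∑ i, ∑ j, βstar i * βstar j * Sig k i j :=
    fun k => haveI := hprob k; evar_sub_dot (Pc k) (hY0c k) (hXc k) βstar
  -- weighted sums
  have hs1 : ∑ k, pk k * evar (Pc k) r1 =
      (∑ k, pk k * evar (Pc k) Y1) - 2 * (βstar ⬝ᵥ ct1)
        + βstar ⬝ᵥ (Sigt *ᵥ βstar) := by
    have e : ∀ k ∈ Finset.univ, pk k * evar (Pc k) r1 =
        pk k * evar (Pc k) Y1 - 2 * (pk k * ∑ i, βstar i * c1 k i)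
          + pk k * ∑ i, ∑ j, βstar i * βstar j * Sig k i j := fun k _ => by
      rw [hev1 k]; ring
    rw [Finset.sum_congr rfl e, Finset.sum_add_distrib, Finset.sum_sub_distrib,
      ← Finset.mul_sum, dot_sum_smul βstar pk c1, dot_sum_smul_mat βstar pk Sig]
  have hs0 : ∑ k, pk k * evar (Pc k) r0 =
      (∑ k, pk k * evar (Pc k) Y0) - 2 * (βstar ⬝ᵥ ct0)
        + βstar ⬝ᵥ (Sigt *ᵥ βstar) := by
    have e : ∀ k ∈ Finset.univ, pk k * evar (Pc k) r0 =
        pk k * evar (Pc k) Y0 - 2 * (pk k * ∑ i, βstar i * c0 k i)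
          + pk k * ∑ i, ∑ j, βstar i * βstar j * Sig k i j := fun k _ => by
      rw [hev0 k]; ring
    rw [Finset.sum_congr rfl e, Finset.sum_add_distrib, Finset.sum_sub_distrib,
      ← Finset.mul_sum, dot_sum_smul βstar pk c0, dot_sum_smul_mat βstar pk Sig]
  -- key quadratic relation
  have hdet : IsUnit Sigt.det := hpos.det_pos.ne'.isUnit
  have hb1 : Sigt *ᵥ β1 = ct1 := by
    show Sigt *ᵥ (Sigt⁻¹ *ᵥ ct1) = ct1
    rw [Matrix.mulVec_mulVec, Matrix.mul_nonsing_inv _ hdet, Matrix.one_mulVec]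
  have hb0 : Sigt *ᵥ β0 = ct0 := by
    show Sigt *ᵥ (Sigt⁻¹ *ᵥ ct0) = ct0
    rw [Matrix.mulVec_mulVec, Matrix.mul_nonsing_inv _ hdet, Matrix.one_mulVec]
  have hQrel : βstar ⬝ᵥ (Sigt *ᵥ βstar)
      = (1 - π) * (βstar ⬝ᵥ ct1) + π * (βstar ⬝ᵥ ct0) := by
    have : Sigt *ᵥ βstar = (1 - π) • ct1 + π • ct0 := by
      show Sigt *ᵥ ((1 - π) • β1 + π • β0) = _
      rw [Matrix.mulVec_add, Matrix.mulVec_smul, Matrix.mulVec_smul, hb1, hb0]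
    rw [this, dotProduct_add, dotProduct_smul, dotProduct_smul,
      smul_eq_mul, smul_eq_mul]
  -- sigH terms coincide
  have hZint : ∀ k, Integrable (fun ω => X ω ⬝ᵥ βstar) (Pc k) :=
    fun k => haveI := hprob k; (memL2_dot (hXc k) βstar).integrable one_le_two
  have hZintP : Integrable (fun ω => X ω ⬝ᵥ βstar) P :=
    (memL2_dot hX βstar).integrable one_le_two
  have hHr : sigH r1 r0 = sigH Y1 Y0 := by
    refine Finset.sum_congr rfl fun k _ => ?_
    haveI := hprob k
    have e1 : ∫ x, r1 x ∂(Pc k) = (∫ x, Y1 x ∂(Pc k)) - ∫ x, X x ⬝ᵥ βstar ∂(Pc k) :=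
      integral_sub ((hY1c k).integrable one_le_two) (hZint k)
    have e0 : ∫ x, r0 x ∂(Pc k) = (∫ x, Y0 x ∂(Pc k)) - ∫ x, X x ⬝ᵥ βstar ∂(Pc k) :=
      integral_sub ((hY0c k).integrable one_le_two) (hZint k)
    have e1P : ∫ x, r1 x ∂P = (∫ x, Y1 x ∂P) - ∫ x, X x ⬝ᵥ βstar ∂P :=
      integral_sub (hY1.integrable one_le_two) hZintP
    have e0P : ∫ x, r0 x ∂P = (∫ x, Y0 x ∂P) - ∫ x, X x ⬝ᵥ βstar ∂P :=
      integral_sub (hY0.integrable one_le_two) hZintP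
    rw [e1, e0, e1P, e0P]
    ring
  -- the main equality
  have hmain : (sig2 r1 r0 + sigH r1 r0) - (sig2 Y1 Y0 + sigH Y1 Y0)
      = -(1 / (π * (1 - π))) * (βstar ⬝ᵥ (Sigt *ᵥ βstar)) := by
    rw [hHr]
    have : sig2 r1 r0 - sig2 Y1 Y0
        = -(1 / (π * (1 - π))) * (βstar ⬝ᵥ (Sigt *ᵥ βstar)) := by
      show (1 / π) * ∑ k, pk k * evar (Pc k) r1
          + (1 / (1 - π)) * ∑ k, pk k * evar (Pc k) r0
          - ((1 / π) * ∑ k, pk k * evar (Pc k) Y1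
          + (1 / (1 - π)) * ∑ k, pk k * evar (Pc k) Y0)
          = -(1 / (π * (1 - π))) * (βstar ⬝ᵥ (Sigt *ᵥ βstar))
      rw [hs1, hs0, hQrel]
      field_simp
      ring
    linarith [this]
  refine ⟨hmain, ?_⟩
  have hQnn : 0 ≤ βstar ⬝ᵥ (Sigt *ᵥ βstar) := by
    have h := hpos.posSemidef.dotProduct_mulVec_nonneg βstar
    rwa [star_trivial] at h
  have hc : 0 ≤ 1 / (π * (1 - π)) := by positivity
  have := mul_nonneg hc hQnn
  linarith
end
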